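/- Let λ₂ ≤ λ₃ ≤ λ₄ ≤ λ₅ be nonnegative reals with λ₂+λ₃+λ₄+λ₅ = 3/2 and λ₂²+λ₃²+λ₄²+λ₅² = 3/4. Then Σ_{α=3}^{5} (1/2 − λ_α)² λ_α ≤ λ₂(1 − λ₂)(3/2 − λ₂). -/
import Mathlib

set_option maxHeartbeats 1000000

/-- Σ_{α=3}^{5} (1/2 − λ_α)² λ_α ≤ λ₂(1 − λ₂)(3/2 − λ₂). -/
theorem stmt2 (l2 l3 l4 l5 : ℝ)
    (h2 : 0 ≤ l2) (h23 : l2 ≤ l3) (h34 : l3 ≤ l4) (h45 : l4 ≤ l5)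
    (hsum : l2 + l3 + l4 + l5 = 3 / 2)
    (hsq : l2 ^ 2 + l3 ^ 2 + l4 ^ 2 + l5 ^ 2 = 3 / 4) :
    (1 / 2 - l3) ^ 2 * l3 + (1 / 2 - l4) ^ 2 * l4 + (1 / 2 - l5) ^ 2 * l5
      ≤ l2 * (1 - l2) * (3 / 2 - l2) := by
  have h3 : 0 ≤ l3 := h2.trans h23
  have h4 : 0 ≤ l4 := h3.trans h34
  have h5 : 0 ≤ l5 := h4.trans h45
  have ht : l2 ≤ 3/8 := by linarith
  have hamgm : 27 * (l3 * l4 * l5) ≤ (l3 + l4 + l5)^3 := by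
    nlinarith [mul_nonneg h3 (sq_nonneg (l4 - l5)), mul_nonneg h4 (sq_nonneg (l3 - l5)),
      mul_nonneg h5 (sq_nonneg (l3 - l4))]
  have hcube : l2^3 ≤ (3/8) * l2^2 := by nlinarith [mul_nonneg (sq_nonneg l2) (sub_nonneg.2 ht)]
  have hs : l3 + l4 + l5 = 3/2 - l2 := by linarith
  have key : 3 * (l3 * l4 * l5) ≤ -l2^3 + l2^2 - l2/2 + 3/8 := by
    rw [hs] at hamgm
    nlinarith [hcube, sq_nonneg l2]
  have h5e : l5 = 3/2 - l2 - l3 - l4 := by linarith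
  subst h5e
  nlinarith [key, hsq, sq_nonneg (l2+l3+l4), mul_self_nonneg l2]
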